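/- Let X be a real normed linear space with continuous dual X*, let C ⊆ X be a nonempty closed convex set, and let x* ∈ barc(C). Then the following statements are equivalent: (a) x* belongs to the interior of barc(C) (with respect to the dual norm topology on X*); (b) there exists γ > 0 such that sup{⟨x*, c⟩ : c ∈ C, ‖c‖ ≥ γ} < σ_C(x*); (c) there exist positive numbers α and R such that ⟨x*, c⟩ ≤ −α‖c‖ for all c ∈ C with ‖c‖ ≥ R; (d) there exist ε > 0 and K > 0 such that ⟨x*, c⟩/‖c‖ ≤ −ε for all c ∈ C with ‖c‖ ≥ K (i.e. limsup_{c∈C, ‖c‖→∞} ⟨x*,c⟩/‖c‖ < 0). -/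

import Mathlib

open Filter Topology

/-- The barrier cone of a set `C` in a normed space: the set of continuous linear functionals
that are bounded above on `C` (i.e. whose support function value `σ_C(x*)` is finite). -/
def barrierCone {X : Type*} [NormedAddCommGroup X] [NormedSpace ℝ X] (C : Set X) :
    Set (X →L[ℝ] ℝ) :=
  {f | ∃ b : ℝ, ∀ c ∈ C, f c ≤ b}

set_option synthInstance.maxHeartbeats 1000000

section aux

variable {X : Type*} [NormedAddCommGroup X] [NormedSpace ℝ X]

/-- Baire category argument: if `xs` lies in the interior of the barrier cone, then the
support function is uniformly bounded on a ball around `xs`. -/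
lemma aux_loc_bound (C : Set X) (xs : X →L[ℝ] ℝ)
    (h : xs ∈ interior (barrierCone C)) :
    ∃ ρ > (0 : ℝ), ∃ M : ℝ, ∀ f : X →L[ℝ] ℝ, ‖f - xs‖ < ρ → ∀ c ∈ C, f c ≤ M := by
  obtain ⟨δ, hδ, hball⟩ :=
    (Metric.nhds_basis_closedBall.mem_iff).1 (mem_interior_iff_mem_nhds.1 h)
  -- closed sets S n
  set S : ℕ → Set (X →L[ℝ] ℝ) := fun n => {f | ∀ c ∈ C, f c ≤ n} with hS
  have hSclosed : ∀ n, IsClosed (S n) := by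
    intro n
    have : S n = ⋂ c ∈ C, {f : X →L[ℝ] ℝ | f c ≤ n} := by
      ext f; simp [hS, Set.mem_iInter]
    rw [this]
    exact isClosed_biInter fun c _ =>
      isClosed_le ((ContinuousLinearMap.apply ℝ ℝ c).continuous) continuous_const
  set T : ℕ → Set (X →L[ℝ] ℝ) := fun n => S n ∪ (Metric.ball xs δ)ᶜ with hT
  have hTclosed : ∀ n, IsClosed (T n) :=
    fun n => (hSclosed n).union (Metric.isOpen_ball.isClosed_compl)
  have hTcover : ⋃ n, T n = Set.univ := by
    apply Set.eq_univ_of_forall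
    intro f
    by_cases hf : f ∈ Metric.ball xs δ
    · have hfb : f ∈ barrierCone C := hball (Metric.ball_subset_closedBall hf)
      obtain ⟨b, hb⟩ := hfb
      obtain ⟨n, hn⟩ := exists_nat_ge b
      exact Set.mem_iUnion.2 ⟨n, Or.inl fun c hc => (hb c hc).trans hn⟩
    · exact Set.mem_iUnion.2 ⟨0, Or.inr hf⟩
  have hdense := dense_iUnion_interior_of_closed hTclosed hTcover
  obtain ⟨f1, hf1mem, hf1ball⟩ :=
    hdense.exists_mem_open Metric.isOpen_ball ⟨xs, Metric.mem_ball_self hδ⟩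
  obtain ⟨n, hf1n⟩ := Set.mem_iUnion.1 hf1mem
  obtain ⟨r0, hr0, hball0⟩ := Metric.isOpen_iff.1 isOpen_interior f1 hf1n
  obtain ⟨r1, hr1, hball1⟩ := Metric.isOpen_iff.1 Metric.isOpen_ball f1 hf1ball
  set r := min r0 r1 with hr
  have hrpos : 0 < r := lt_min hr0 hr1
  have hsub : Metric.ball f1 r ⊆ S n := by
    intro g hg
    have hgT : g ∈ T n := interior_subset (hball0 (Metric.ball_subset_ball (min_le_left _ _) hg))
    have hgball : g ∈ Metric.ball xs δ := hball1 (Metric.ball_subset_ball (min_le_right _ _) hg)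
    rcases hgT with h' | h'
    · exact h'
    · exact absurd hgball h'
  -- the reflected point 2 xs - f1 is in the barrier cone
  have href : xs + xs - f1 ∈ barrierCone C := by
    apply hball
    have heq : xs + xs - f1 - xs = xs - f1 := by abel
    rw [Metric.mem_closedBall, dist_eq_norm, heq, ← norm_neg]
    simp only [neg_sub]
    exact le_of_lt (by simpa [dist_eq_norm] using hf1ball)
  obtain ⟨M0, hM0⟩ := href
  refine ⟨r / 2, half_pos hrpos, (M0 + n) / 2, fun f hf c hc => ?_⟩
  set g : X →L[ℝ] ℝ := f1 + (f - xs) + (f - xs) with hg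
  have hgball : g ∈ Metric.ball f1 r := by
    rw [Metric.mem_ball, dist_eq_norm]
    have heq : g - f1 = (f - xs) + (f - xs) := by rw [hg]; abel
    rw [heq]
    calc ‖(f - xs) + (f - xs)‖ ≤ ‖f - xs‖ + ‖f - xs‖ := norm_add_le _ _
      _ < r := by linarith
  have hgc : g c ≤ n := hsub hgball c hc
  have hrefc : (xs + xs - f1) c ≤ M0 := hM0 c hc
  have hcomb : (xs + xs - f1) c + g c = 2 * f c := by
    simp [hg, ContinuousLinearMap.add_apply, ContinuousLinearMap.sub_apply]
    ring
  linarith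

lemma aux_a_to_c (C : Set X) (xs : X →L[ℝ] ℝ)
    (h : xs ∈ interior (barrierCone C)) :
    ∃ α > (0 : ℝ), ∃ R > (0 : ℝ), ∀ c ∈ C, R ≤ ‖c‖ → xs c ≤ -α * ‖c‖ := by
  obtain ⟨ρ, hρ, M, hM⟩ := aux_loc_bound C xs h
  have key : ∀ c ∈ C, xs c + (ρ / 2) * ‖c‖ ≤ M := by
    intro c hc
    by_cases h0 : c = 0
    · have := hM xs (by simpa using hρ) c hc
      simp only [h0, map_zero, norm_zero] at this ⊢
      linarith
    · obtain ⟨g, hgnorm, hgc⟩ := exists_dual_vector ℝ c (norm_ne_zero_iff.mpr h0)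
      have hgc' : g c = ‖c‖ := by exact_mod_cast hgc
      have hfar : ‖xs + (ρ / 2) • g - xs‖ < ρ := by
        have heq : xs + (ρ / 2) • g - xs = (ρ / 2) • g := by abel
        have hns := norm_smul (β := X →L[ℝ] ℝ) (ρ / 2) g
        rw [heq, hns, hgnorm]
        simp only [mul_one]
        rw [Real.norm_eq_abs, abs_of_pos (half_pos hρ)]
        linarith
      have := hM _ hfar c hc
      simp only [ContinuousLinearMap.add_apply, ContinuousLinearMap.smul_apply, smul_eq_mul,
        hgc'] at this
      linarith
  refine ⟨ρ / 4, by linarith, max 1 (4 * |M| / ρ + 1), lt_of_lt_of_le one_pos (le_max_left _ _),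
    fun c hc hcn => ?_⟩
  have h1 : 4 * |M| / ρ + 1 ≤ ‖c‖ := le_trans (le_max_right _ _) hcn
  have h2 : 4 * |M| / ρ ≤ ‖c‖ := by linarith
  have h3 : 4 * |M| ≤ ‖c‖ * ρ := by rwa [div_le_iff₀ hρ] at h2
  have h4 := key c hc
  have h5 := le_abs_self M
  nlinarith

end aux

/-- For a nonempty closed convex set `C` in a real normed space and
`x* ∈ barc(C)`, the following are equivalent:
(a) `x* ∈ Int barc(C)` (interior in the dual norm topology);
(b) there exists `γ > 0` with `sup{⟨x*,c⟩ : c ∈ C, ‖c‖ ≥ γ} < σ_C(x*)`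
    (expressed as: some bound `b` strictly below `σ_C(x*) = sSup (x* '' C)` dominates
    `⟨x*,c⟩` for all `c ∈ C` with `‖c‖ ≥ γ`);
(c) there exist `α, R > 0` with `⟨x*,c⟩ ≤ -α‖c‖` for all `c ∈ C`, `‖c‖ ≥ R`;
(d) there exist `ε, K > 0` with `⟨x*,c⟩/‖c‖ ≤ -ε` for all `c ∈ C`, `‖c‖ ≥ K`. -/
theorem statement1 {X : Type*} [NormedAddCommGroup X] [NormedSpace ℝ X]
    (C : Set X) (hne : C.Nonempty) (hcl : IsClosed C) (hconv : Convex ℝ C)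
    (xs : X →L[ℝ] ℝ) (hxs : xs ∈ barrierCone C) :
    List.TFAE
      [xs ∈ interior (barrierCone C),
       ∃ γ > (0 : ℝ), ∃ b : ℝ, b < sSup (xs '' C) ∧ ∀ c ∈ C, γ ≤ ‖c‖ → xs c ≤ b,
       ∃ α > (0 : ℝ), ∃ R > (0 : ℝ), ∀ c ∈ C, R ≤ ‖c‖ → xs c ≤ -α * ‖c‖,
       ∃ ε > (0 : ℝ), ∃ K > (0 : ℝ), ∀ c ∈ C, K ≤ ‖c‖ → xs c / ‖c‖ ≤ -ε] := by
  obtain ⟨b0, hb0⟩ := hxs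
  have hbdd : BddAbove (xs '' C) := ⟨b0, by rintro _ ⟨c, hc, rfl⟩; exact hb0 c hc⟩
  have hne' : (xs '' C).Nonempty := hne.image _
  tfae_have 1 → 3 := fun h => aux_a_to_c C xs h
  tfae_have 3 → 1 := by
    rintro ⟨α, hα, R, hR, h⟩
    rw [mem_interior]
    refine ⟨Metric.ball xs (α / 2), fun f hf => ?_, Metric.isOpen_ball,
      Metric.mem_ball_self (half_pos hα)⟩
    refine ⟨|b0| + (α / 2) * R, fun c hc => ?_⟩
    have hfd : ‖f - xs‖ < α / 2 := by simpa [dist_eq_norm] using hf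
    have hle : f c - xs c ≤ ‖f - xs‖ * ‖c‖ := by
      have h1 : f c - xs c = (f - xs) c := by simp
      rw [h1]
      exact le_trans (le_abs_self _) ((f - xs).le_opNorm c)
    have hle' : f c ≤ xs c + (α / 2) * ‖c‖ := by
      have := mul_le_mul_of_nonneg_right hfd.le (norm_nonneg c)
      linarith
    by_cases hfar : R ≤ ‖c‖
    · have := h c hc hfar
      have hb : |b0| ≥ 0 := abs_nonneg _
      nlinarith [norm_nonneg c]
    · push_neg at hfar
      have := hb0 c hc
      have hcn : 0 ≤ ‖c‖ := norm_nonneg c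
      nlinarith [le_abs_self b0]
  tfae_have 3 → 2 := by
    rintro ⟨α, hα, R, hR, h⟩
    set σ := sSup (xs '' C) with hσ
    refine ⟨max R ((1 - σ) / α + 1), lt_of_lt_of_le hR (le_max_left _ _), σ - 1,
      sub_lt_self _ one_pos, fun c hc hcn => ?_⟩
    have h1 : R ≤ ‖c‖ := le_trans (le_max_left _ _) hcn
    have h2 : (1 - σ) / α + 1 ≤ ‖c‖ := le_trans (le_max_right _ _) hcn
    have h3 : (1 - σ) / α ≤ ‖c‖ := by linarith
    have h4 : 1 - σ ≤ ‖c‖ * α := by rwa [div_le_iff₀ hα] at h3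
    have := h c hc h1
    nlinarith
  tfae_have 2 → 3 := by
    rintro ⟨γ, hγ, b, hbσ, hb⟩
    obtain ⟨y, hy, hby⟩ := exists_lt_of_lt_csSup hne' hbσ
    obtain ⟨c0, hc0, rfl⟩ := hy
    set γ' := max γ (‖c0‖ + 1) with hγ'def
    have hγ'γ : γ ≤ γ' := le_max_left _ _
    have hc0γ' : ‖c0‖ + 1 ≤ γ' := le_max_right _ _
    have hden : 0 < γ' + ‖c0‖ := by linarith [norm_nonneg c0]
    set β := (xs c0 - b) / (γ' + ‖c0‖) with hβdef
    have hβ : 0 < β := div_pos (by linarith) hden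
    have hβden : β * (γ' + ‖c0‖) = xs c0 - b := div_mul_cancel₀ _ hden.ne'
    have key : ∀ c ∈ C, γ' ≤ ‖c‖ → xs c ≤ xs c0 + β * ‖c0‖ - β * ‖c‖ := by
      intro c hc hcn
      have hlt : ‖c0‖ < γ' := by linarith
      -- IVT to find the crossing point
      have hφcont : Continuous fun t : ℝ => ‖c0 + t • (c - c0)‖ := by
        apply continuous_norm.comp
        exact continuous_const.add (continuous_id.smul continuous_const)
      have hmem : γ' ∈ Set.Icc ‖c0 + (0 : ℝ) • (c - c0)‖ ‖c0 + (1 : ℝ) • (c - c0)‖ := by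
        constructor
        · simpa using hlt.le
        · simpa using hcn
      obtain ⟨t, htI, htγ'0⟩ := intermediate_value_Icc zero_le_one hφcont.continuousOn hmem
      have htγ' : ‖c0 + t • (c - c0)‖ = γ' := htγ'0
      obtain ⟨ht0, ht1⟩ := htI
      have ht0' : 0 < t := by
        rcases ht0.eq_or_lt with h' | h'
        · exfalso; rw [← h'] at htγ'; simp at htγ'; linarith
        · exact h'
      have hctC : c0 + t • (c - c0) ∈ C := by
        have heq : c0 + t • (c - c0) = (1 - t) • c0 + t • c := by module
        rw [heq]
        exact hconv hc0 hc (by linarith) ht0'.le (by ring)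
      have hxsct : xs (c0 + t • (c - c0)) ≤ b :=
        hb _ hctC (by rw [htγ']; linarith)
      have hval : xs (c0 + t • (c - c0)) = xs c0 + t * (xs c - xs c0) := by
        rw [map_add, map_smul, map_sub, smul_eq_mul]
      have h1 : xs c0 + t * (xs c - xs c0) ≤ b := hval ▸ hxsct
      have h2 : t * ‖c - c0‖ ≤ γ' + ‖c0‖ := by
        have : ‖t • (c - c0)‖ ≤ ‖c0 + t • (c - c0)‖ + ‖c0‖ := by
          have := norm_sub_le (c0 + t • (c - c0)) c0
          simpa using this
        rw [norm_smul (β := X), Real.norm_eq_abs, abs_of_pos ht0', htγ'] at this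
        linarith
      have h3 : ‖c‖ - ‖c0‖ ≤ ‖c - c0‖ := norm_sub_norm_le c c0
      have k1 : t * β * (‖c‖ - ‖c0‖) ≤ t * β * ‖c - c0‖ :=
        mul_le_mul_of_nonneg_left h3 (by positivity)
      have k2 : β * (t * ‖c - c0‖) ≤ β * (γ' + ‖c0‖) :=
        mul_le_mul_of_nonneg_left h2 hβ.le
      have hA : 0 ≤ t * (xs c0 + β * ‖c0‖ - β * ‖c‖ - xs c) := by nlinarith
      have := (mul_nonneg_iff_of_pos_left ht0').1 hA
      linarith
    set A := xs c0 + β * ‖c0‖ with hA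
    refine ⟨β / 2, by linarith, max γ' (2 * |A| / β + 1),
      lt_of_lt_of_le (lt_of_lt_of_le hγ hγ'γ) (le_max_left _ _), fun c hc hcn => ?_⟩
    have h1 : γ' ≤ ‖c‖ := le_trans (le_max_left _ _) hcn
    have h2 : 2 * |A| / β + 1 ≤ ‖c‖ := le_trans (le_max_right _ _) hcn
    have h3 : 2 * |A| / β ≤ ‖c‖ := by linarith
    have h4 : 2 * |A| ≤ ‖c‖ * β := by rwa [div_le_iff₀ hβ] at h3
    have h5 := key c hc h1
    have h6 := le_abs_self A
    nlinarith
  tfae_have 3 → 4 := by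
    rintro ⟨α, hα, R, hR, h⟩
    refine ⟨α, hα, R, hR, fun c hc hcn => ?_⟩
    have hc0 : 0 < ‖c‖ := lt_of_lt_of_le hR hcn
    rw [div_le_iff₀ hc0]
    have := h c hc hcn
    linarith
  tfae_have 4 → 3 := by
    rintro ⟨ε, hε, K, hK, h⟩
    refine ⟨ε, hε, K, hK, fun c hc hcn => ?_⟩
    have hc0 : 0 < ‖c‖ := lt_of_lt_of_le hK hcn
    have := h c hc hcn
    rw [div_le_iff₀ hc0] at this
    linarith
  tfae_finish
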